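/- arXiv:2504.03421 — 2 statements merged into one kernel-verified Lean document; each statement's English description precedes it below -/
import Mathlib

section
/- Let H be a Hilbert space, A : H → H a compact self-adjoint operator, and V ⊆ H a finite-dimensional subspace such that ⟨A g, g⟩ ≥ 0 for all g in the orthogonal complement of V. Then A has at most dim V negative eigenvalues (counted with multiplicity). -/
open RealInnerProductSpace

/-- The number of eigenvalues of `A` smaller than `c`, counted with multiplicity. -/
noncomputable def eigCountBelow {H : Type*} [NormedAddCommGroup H] [InnerProductSpace ℝ H]
    (A : H →L[ℝ] H) (c : ℝ) : ℕ∞ :=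
  ∑' θ : {t : ℝ // t < c},
    (Module.finrank ℝ (Module.End.eigenspace (A : H →ₗ[ℝ] H) θ.1) : ℕ∞)

/-- Every `ℕ∞`-valued family is summable. -/
lemma enat_summable {ι : Type*} (f : ι → ℕ∞) : Summable f :=
  ⟨_, hasSum_of_isLUB _ (isLUB_iSup (f := fun s : Finset ι => ∑ i ∈ s, f i))⟩

/-- Finrank of a finite independent supremum equals the sum of finranks. -/
lemma finrank_finset_sup_eq_sum {ι K M : Type*} [DivisionRing K] [AddCommGroup M] [Module K M]
    (E : ι → Submodule K M) (hind : iSupIndep E) (T : Finset ι)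
    (hfd : ∀ θ ∈ T, FiniteDimensional K (E θ)) :
    FiniteDimensional K (T.sup E : Submodule K M) ∧
      Module.finrank K (T.sup E : Submodule K M) = ∑ θ ∈ T, Module.finrank K (E θ) := by
  classical
  induction T using Finset.induction_on with
  | empty => exact ⟨by rw [Finset.sup_empty]; infer_instance, by rw [Finset.sup_empty]; simp⟩
  | @insert a T ha ih =>
    have hfdT := ih (fun θ hθ => hfd θ (Finset.mem_insert_of_mem hθ))
    haveI h1 : FiniteDimensional K (T.sup E : Submodule K M) := hfdT.1
    haveI h2 : FiniteDimensional K (E a) := hfd a (Finset.mem_insert_self a T)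
    have hdisj : E a ⊓ T.sup E = ⊥ := by
      rw [← disjoint_iff]
      refine (hind a).mono_right ?_
      refine Finset.sup_le fun θ hθ => ?_
      exact le_iSup₂ (f := fun (j : ι) (_ : j ≠ a) => E j) θ (fun h => ha (h ▸ hθ))
    rw [Finset.sup_insert]
    haveI h3 : FiniteDimensional K ((E a ⊔ T.sup E : Submodule K M)) :=
      Submodule.finiteDimensional_sup _ _
    refine ⟨h3, ?_⟩
    have := Submodule.finrank_sup_add_finrank_inf_eq (E a) (T.sup E)
    rw [hdisj, finrank_bot, add_zero] at this
    rw [this, Finset.sum_insert ha, hfdT.2]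

/-- a compact self-adjoint operator `A` such that `⟪A g, g⟫ ≥ 0` on the
orthogonal complement of a finite-dimensional subspace `V` has at most `dim V` negative
eigenvalues (counted with multiplicity). -/
theorem stmt0 {H : Type*} [NormedAddCommGroup H] [InnerProductSpace ℝ H] [CompleteSpace H]
    (A : H →L[ℝ] H) (hA : IsCompactOperator A) (hsa : IsSelfAdjoint A)
    (V : Submodule ℝ H) [FiniteDimensional ℝ V]
    (hpos : ∀ g ∈ Vᗮ, 0 ≤ ⟪A g, g⟫) :
    eigCountBelow A 0 ≤ (Module.finrank ℝ V : ℕ∞) := by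
  classical
  set E : {t : ℝ // t < 0} → Submodule ℝ H :=
    fun θ => Module.End.eigenspace (A : H →ₗ[ℝ] H) θ.1 with hE
  have hind : iSupIndep E :=
    (Module.End.eigenspaces_iSupIndep (A : H →ₗ[ℝ] H)).comp Subtype.val_injective
  -- the supremum of the negative eigenspaces intersects `Vᗮ` trivially
  have hinter : ∀ x, x ∈ (⨆ θ, E θ) → x ∈ Vᗮ → x = 0 := by
    intro x hx hx'
    obtain ⟨f, hf, hfx⟩ := (Submodule.mem_iSup_iff_exists_finsupp E x).mp hx
    have horth : ∀ θ θ' : {t : ℝ // t < 0}, θ ≠ θ' → ⟪f θ, f θ'⟫ = 0 := by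
      intro θ θ' hne
      have h1 : A (f θ) = θ.1 • f θ := Module.End.mem_eigenspace_iff.mp (hf θ)
      have h2 : A (f θ') = θ'.1 • f θ' := Module.End.mem_eigenspace_iff.mp (hf θ')
      have hs := hsa.isSymmetric (f θ) (f θ')
      simp only [ContinuousLinearMap.coe_coe] at hs
      rw [h1, h2, real_inner_smul_left, real_inner_smul_right] at hs
      have hθne : θ.1 ≠ θ'.1 := fun h => hne (Subtype.ext h)
      have : (θ.1 - θ'.1) * ⟪f θ, f θ'⟫ = 0 := by ring_nf; linarith
      rcases mul_eq_zero.mp this with h | h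
      · exact absurd (sub_eq_zero.mp h) hθne
      · exact h
    have hx_sum : x = ∑ θ ∈ f.support, f θ := hfx.symm
    have hAf : ∀ θ, A (f θ) = θ.1 • f θ := fun θ => Module.End.mem_eigenspace_iff.mp (hf θ)
    have hAx : ⟪A x, x⟫ = ∑ θ ∈ f.support, θ.1 * ‖f θ‖ ^ 2 := by
      rw [hx_sum, map_sum, sum_inner]
      refine Finset.sum_congr rfl fun θ hθ => ?_
      rw [inner_sum]
      rw [Finset.sum_eq_single_of_mem θ hθ]
      · rw [hAf θ, real_inner_smul_left, real_inner_self_eq_norm_sq]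
      · intro θ' hθ' hne
        rw [hAf θ, real_inner_smul_left, horth θ θ' (fun h => hne h.symm), mul_zero]
    have h0 : 0 ≤ ⟪A x, x⟫ := hpos x hx'
    by_cases hsupp : f.support = ∅
    · rw [hx_sum, hsupp, Finset.sum_empty]
    · exfalso
      have : ∑ θ ∈ f.support, θ.1 * ‖f θ‖ ^ 2 < 0 := by
        refine Finset.sum_neg (fun θ hθ => ?_) (Finset.nonempty_of_ne_empty hsupp)
        have hfθ : f θ ≠ 0 := Finsupp.mem_support_iff.mp hθ
        have : (0:ℝ) < ‖f θ‖ ^ 2 := pow_pos (norm_pos_iff.mpr hfθ) 2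
        exact mul_neg_of_neg_of_pos θ.2 this
      rw [hAx] at h0
      linarith
  -- finite-sum bound
  have key : ∀ s : Finset {t : ℝ // t < 0},
      ∑ θ ∈ s, Module.finrank ℝ (E θ) ≤ Module.finrank ℝ V := by
    intro s
    set T := s.filter (fun θ => FiniteDimensional ℝ (E θ)) with hT
    have hsum : ∑ θ ∈ T, Module.finrank ℝ (E θ) = ∑ θ ∈ s, Module.finrank ℝ (E θ) :=
      Finset.sum_filter_of_ne fun θ _ h => by
        by_contra hfd
        exact h (Module.finrank_of_infinite_dimensional hfd)
    rw [← hsum]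
    have hfdT : ∀ θ ∈ T, FiniteDimensional ℝ (E θ) := fun θ hθ => (Finset.mem_filter.mp hθ).2
    obtain ⟨hWfd, hWrank⟩ := finrank_finset_sup_eq_sum E hind T hfdT
    rw [← hWrank]
    haveI := hWfd
    -- the orthogonal projection onto V is injective on `T.sup E`
    set W : Submodule ℝ H := T.sup E with hW
    let φ : W →ₗ[ℝ] V := (V.orthogonalProjectionOnto).toLinearMap.comp W.subtype
    have hinj : Function.Injective φ := by
      rw [← LinearMap.ker_eq_bot, LinearMap.ker_eq_bot']
      rintro ⟨x, hxW⟩ hφx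
      have hφx' : V.orthogonalProjectionOnto x = 0 := hφx
      have hxV : x ∈ Vᗮ := Submodule.orthogonalProjectionOnto_eq_zero_iff.mp hφx'
      have hxS : x ∈ ⨆ θ, E θ := by
        have : W ≤ ⨆ θ, E θ := Finset.sup_le fun θ _ => le_iSup E θ
        exact this hxW
      exact Subtype.ext (hinter x hxS hxV)
    exact LinearMap.finrank_le_finrank_of_injective hinj
  -- conclude via tsum ≤ sup of partial sums
  unfold eigCountBelow
  refine Summable.tsum_le_of_sum_le (enat_summable _) fun s => ?_
  calc ∑ θ ∈ s, (Module.finrank ℝ (Module.End.eigenspace (A : H →ₗ[ℝ] H) θ.1) : ℕ∞)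
      = ((∑ θ ∈ s, Module.finrank ℝ (E θ) : ℕ) : ℕ∞) := by push_cast [hE]; rfl
    _ ≤ (Module.finrank ℝ V : ℕ∞) := by exact_mod_cast key s
end

section
/- Let A be a compact self-adjoint operator on an infinite-dimensional Hilbert space such that for every finite-dimensional subspace V there exists g ∈ V^⊥ with ⟨A g, g⟩ < 0. Then A has infinitely many negative eigenvalues (counted with multiplicity). -/
open RealInnerProductSpace

lemma enat_hasSum {ι : Type*} (f : ι → ℕ∞) :
    HasSum f (⨆ s : Finset ι, ∑ i ∈ s, f i) :=
  tendsto_atTop_iSup fun _ _ hst => Finset.sum_le_sum_of_subset hst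

lemma enat_tsum_eq_top {ι : Type*} {f : ι → ℕ∞} {S : Set ι} (hS : S.Infinite)
    (hf : ∀ i ∈ S, 1 ≤ f i) : ∑' i, f i = ⊤ := by
  rw [(enat_hasSum f).tsum_eq]
  have key : ∀ n : ℕ, (n : ℕ∞) ≤ ⨆ s : Finset ι, ∑ i ∈ s, f i := by
    intro n
    obtain ⟨t, hts, htcard⟩ := hS.exists_subset_card_eq n
    calc (n : ℕ∞) = ∑ _i ∈ t, 1 := by simp [htcard]
    _ ≤ ∑ i ∈ t, f i := Finset.sum_le_sum fun i hi => hf i (hts hi)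
    _ ≤ _ := le_iSup (fun s : Finset ι => ∑ i ∈ s, f i) t
  by_contra hne
  obtain ⟨k, hk⟩ := WithTop.ne_top_iff_exists.mp hne
  have := key (k + 1)
  rw [← hk] at this
  exact absurd (Nat.cast_le.mp this) (by omega)
open Pointwise

lemma eig_fd {H : Type*} [NormedAddCommGroup H] [InnerProductSpace ℝ H]
    (A : H →L[ℝ] H) (hA : IsCompactOperator A) {θ : ℝ} (hθ : θ ≠ 0) :
    FiniteDimensional ℝ (Module.End.eigenspace (A : H →ₗ[ℝ] H) θ) := by
  set E := Module.End.eigenspace (A : H →ₗ[ℝ] H) θ with hE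
  have hmem : ∀ x : H, x ∈ E ↔ A x = θ • x := fun x => Module.End.mem_eigenspace_iff
  have hEc : IsClosed (E : Set H) := by
    have : (E : Set H) = {x | A x = θ • x} := by ext x; exact hmem x
    rw [this]
    exact isClosed_eq A.continuous (continuous_id.const_smul θ)
  obtain ⟨K, hK, hAK⟩ := hA.image_closedBall_subset_compact 1
  set D : Set H := (E : Set H) ∩ Metric.closedBall 0 1 with hD
  have hDc : IsClosed D := hEc.inter Metric.isClosed_closedBall
  have hDsub : D ⊆ θ⁻¹ • K := by
    rintro x ⟨hxE, hx1⟩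
    refine ⟨A x, hAK ⟨x, hx1, rfl⟩, ?_⟩
    show θ⁻¹ • A x = x
    rw [(hmem x).mp hxE, smul_smul, inv_mul_cancel₀ hθ, one_smul]
  have hDK : IsCompact D := (hK.smul θ⁻¹).of_isClosed_subset hDc hDsub
  have hcb : IsCompact (Metric.closedBall (0 : E) 1) := by
    rw [Topology.IsEmbedding.subtypeVal.isCompact_iff]
    convert hDK using 1
    ext x
    simp only [Set.mem_image, Metric.mem_closedBall, dist_zero_right, hD,
      Set.mem_inter_iff, SetLike.mem_coe]
    constructor
    · rintro ⟨y, hy, rfl⟩; exact ⟨y.2, hy⟩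
    · rintro ⟨hxE, hx⟩; exact ⟨⟨x, hxE⟩, hx, rfl⟩
  exact FiniteDimensional.of_isCompact_closedBall₀ ℝ one_pos hcb

lemma exists_neg_eigenvalue {W : Type*} [NormedAddCommGroup W] [InnerProductSpace ℝ W]
    (B : W →L[ℝ] W) (hB : IsCompactOperator B)
    (hsym : ∀ x y : W, ⟪B x, y⟫ = ⟪x, B y⟫)
    {g : W} (hg : ⟪B g, g⟫ < 0) :
    ∃ (μ : ℝ) (w : W), μ < 0 ∧ w ≠ 0 ∧ B w = μ • w := by
  have hg0 : g ≠ 0 := by rintro rfl; simp at hg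
  have hgn : (0:ℝ) < ‖g‖ := norm_pos_iff.mpr hg0
  set Q : W → ℝ := fun x => ⟪B x, x⟫ with hQ
  have hQsmul : ∀ (c : ℝ) (x : W), Q (c • x) = c * c * Q x := by
    intro c x
    simp only [hQ, map_smul, real_inner_smul_left, real_inner_smul_right]
    ring
  set u : W := ‖g‖⁻¹ • g with hu_def
  have hu : ‖u‖ = 1 := by
    rw [hu_def, norm_smul]
    simp [abs_of_pos (inv_pos.mpr hgn), inv_mul_cancel₀ hgn.ne']
  have hBu : Q u < 0 := by
    rw [hu_def, hQsmul]
    exact mul_neg_of_pos_of_neg (by positivity) hg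
  set S : Set ℝ := Q '' {x | ‖x‖ = 1} with hS_def
  have hSne : S.Nonempty := ⟨Q u, u, hu, rfl⟩
  have hbdd : BddBelow S := by
    refine ⟨-‖B‖, ?_⟩
    rintro _ ⟨x, hx, rfl⟩
    have h1 : |⟪B x, x⟫| ≤ ‖B x‖ * ‖x‖ := abs_real_inner_le_norm _ _
    have h2 : ‖B x‖ ≤ ‖B‖ * ‖x‖ := B.le_opNorm x
    have hx1 : ‖x‖ = 1 := hx
    rw [hx1] at h1 h2
    simp only [mul_one] at h1 h2
    have := neg_abs_le (⟪B x, x⟫)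
    simp only [hQ]
    linarith
  set m : ℝ := sInf S with hm_def
  have hm0 : m < 0 := lt_of_le_of_lt (csInf_le hbdd ⟨u, hu, rfl⟩) hBu
  have hmx : ∀ x : W, m * ‖x‖ ^ 2 ≤ ⟪B x, x⟫ := by
    intro x
    rcases eq_or_ne x 0 with rfl | hx0
    · simp
    · have hxn : (0:ℝ) < ‖x‖ := norm_pos_iff.mpr hx0
      have hmem : Q (‖x‖⁻¹ • x) ∈ S := ⟨_, by
        rw [Set.mem_setOf_eq, norm_smul]
        simp [abs_of_pos (inv_pos.mpr hxn), inv_mul_cancel₀ hxn.ne'], rfl⟩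
      have h1 : m ≤ Q (‖x‖⁻¹ • x) := csInf_le hbdd hmem
      rw [hQsmul] at h1
      have h2 : m * (‖x‖ * ‖x‖) ≤ (‖x‖⁻¹ * ‖x‖⁻¹ * Q x) * (‖x‖ * ‖x‖) := by
        nlinarith [mul_pos hxn hxn]
      have h4 : (‖x‖⁻¹ * ‖x‖⁻¹ * Q x) * (‖x‖ * ‖x‖) = Q x := by
        field_simp
      show m * ‖x‖ ^ 2 ≤ Q x
      rw [sq]
      linarith
  set C : W →L[ℝ] W := B - m • ContinuousLinearMap.id ℝ W with hC_def
  have hCapp : ∀ x : W, C x = B x - m • x := by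
    intro x; simp [hC_def]
  have hCpos : ∀ x : W, 0 ≤ ⟪C x, x⟫ := by
    intro x
    rw [hCapp, inner_sub_left, real_inner_smul_left, real_inner_self_eq_norm_sq]
    linarith [hmx x]
  have hCsym : ∀ x y : W, ⟪C x, y⟫ = ⟪x, C y⟫ := by
    intro x y
    rw [hCapp, hCapp, inner_sub_left, inner_sub_right, real_inner_smul_left,
      real_inner_smul_right, hsym x y]
  have hCS : ∀ x y : W, ⟪C x, y⟫ ^ 2 ≤ ⟪C x, x⟫ * ⟪C y, y⟫ := by
    intro x y
    have hyx : ⟪C y, x⟫ = ⟪C x, y⟫ := by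
      rw [hCsym y x, real_inner_comm]
    have hquad : ∀ t : ℝ, 0 ≤ ⟪C y, y⟫ * (t * t) + (2 * ⟪C x, y⟫) * t + ⟪C x, x⟫ := by
      intro t
      have h := hCpos (x + t • y)
      simp only [map_add, map_smul, inner_add_left, inner_add_right, real_inner_smul_left,
        real_inner_smul_right] at h
      rw [hyx] at h
      nlinarith [h]
    have hd := discrim_le_zero hquad
    rw [discrim] at hd
    nlinarith [hd]
  have hCx : ∀ x : W, ‖C x‖ ^ 2 ≤ ⟪C x, x⟫ * ‖C‖ := by
    intro x
    have h3 : ⟪C x, C x⟫ = ‖C x‖ ^ 2 := real_inner_self_eq_norm_sq _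
    rcases eq_or_lt_of_le (norm_nonneg (C x)) with h0 | h0
    · rw [← h0]
      simpa using mul_nonneg (hCpos x) (norm_nonneg C)
    · have h1 := hCS x (C x)
      rw [h3] at h1
      have h2 : ⟪C (C x), C x⟫ ≤ ‖C‖ * ‖C x‖ ^ 2 := by
        calc ⟪C (C x), C x⟫ ≤ ‖C (C x)‖ * ‖C x‖ := real_inner_le_norm _ _
          _ ≤ (‖C‖ * ‖C x‖) * ‖C x‖ := by
              have := C.le_opNorm (C x)
              nlinarith [norm_nonneg (C x)]
          _ = ‖C‖ * ‖C x‖ ^ 2 := by ring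
    -- careful: hCS x (Cx) gives ⟪C x, C x⟫ ^2 ≤ ⟪C x, x⟫ * ⟪C (C x), C x⟫
      have h4 : (‖C x‖ ^ 2) * (‖C x‖ ^ 2) ≤ (⟪C x, x⟫ * ‖C‖) * ‖C x‖ ^ 2 := by
        nlinarith [mul_le_mul_of_nonneg_left h2 (hCpos x), h1]
      exact le_of_mul_le_mul_right h4 (by positivity)
  -- minimizing sequence
  obtain ⟨v, _hv, hvtend, hvmem⟩ := exists_seq_tendsto_sInf hSne hbdd
  have hchoose : ∀ n : ℕ, ∃ x : W, ‖x‖ = 1 ∧ Q x = v n := by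
    intro n; obtain ⟨x, hx, hx'⟩ := hvmem n; exact ⟨x, hx, hx'⟩
  choose x hx1 hx2 using hchoose
  simp only [hQ] at hx2
  have hq : Filter.Tendsto (fun n => ⟪C (x n), x n⟫) Filter.atTop (nhds 0) := by
    have heq : ∀ n, ⟪C (x n), x n⟫ = v n - m := by
      intro n
      rw [hCapp, inner_sub_left, real_inner_smul_left, real_inner_self_eq_norm_sq, hx1, hx2]
      ring
    simp_rw [heq]
    have h5 := hvtend.sub_const m
    rw [← hm_def, sub_self] at h5
    exact h5
  have hCx0 : Filter.Tendsto (fun n => C (x n)) Filter.atTop (nhds 0) := by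
    rw [tendsto_zero_iff_norm_tendsto_zero]
    refine squeeze_zero (fun n => norm_nonneg _)
      (g := fun n => Real.sqrt (⟪C (x n), x n⟫ * ‖C‖)) (fun n => ?_) ?_
    · have h := hCx (x n)
      calc ‖C (x n)‖ = Real.sqrt (‖C (x n)‖ ^ 2) := by
            rw [Real.sqrt_sq (norm_nonneg _)]
        _ ≤ Real.sqrt (⟪C (x n), x n⟫ * ‖C‖) := Real.sqrt_le_sqrt h
    · have : Filter.Tendsto (fun n => ⟪C (x n), x n⟫ * ‖C‖) Filter.atTop (nhds 0) := by
        simpa using hq.mul_const ‖C‖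
      have hs := (Real.continuous_sqrt.tendsto 0).comp this
      simpa only [Function.comp_def, Real.sqrt_zero] using hs
  obtain ⟨K, hK, hBK⟩ := hB.image_closedBall_subset_compact 1
  have hmemK : ∀ n, B (x n) ∈ K := by
    intro n
    exact hBK ⟨x n, by simp [Metric.mem_closedBall, hx1 n], rfl⟩
  obtain ⟨y, _hyK, φ, hφ, hconv⟩ := hK.isSeqCompact hmemK
  have hCsub : Filter.Tendsto (fun k => C (x (φ k))) Filter.atTop (nhds 0) :=
    hCx0.comp hφ.tendsto_atTop
  have hrep : ∀ n, x n = m⁻¹ • (B (x n) - C (x n)) := by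
    intro n
    rw [hCapp]
    rw [sub_sub_cancel, smul_smul, inv_mul_cancel₀ hm0.ne, one_smul]
  have hxconv : Filter.Tendsto (fun k => x (φ k)) Filter.atTop (nhds (m⁻¹ • y)) := by
    have h1 : Filter.Tendsto (fun k => m⁻¹ • (B (x (φ k)) - C (x (φ k)))) Filter.atTop
        (nhds (m⁻¹ • (y - 0))) := (hconv.sub hCsub).const_smul m⁻¹
    simp only [sub_zero] at h1
    convert h1 using 2 with k
    exact hrep (φ k)
  set w : W := m⁻¹ • y with hw_def
  have hw1 : ‖w‖ = 1 := by
    have hn : Filter.Tendsto (fun k => ‖x (φ k)‖) Filter.atTop (nhds ‖w‖) := hxconv.norm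
    simp only [hx1] at hn
    exact tendsto_nhds_unique hn tendsto_const_nhds
  have hw0 : w ≠ 0 := by
    intro h; rw [h, norm_zero] at hw1; norm_num at hw1
  have hBy : B w = y := by
    have h1 : Filter.Tendsto (fun k => B (x (φ k))) Filter.atTop (nhds (B w)) :=
      (B.continuous.tendsto w).comp hxconv
    exact tendsto_nhds_unique h1 hconv
  refine ⟨m, w, hm0, hw0, ?_⟩
  rw [hBy, hw_def, smul_smul, mul_inv_cancel₀ hm0.ne, one_smul]

/-- a compact self-adjoint operator on an infinite-dimensional Hilbert space
whose quadratic form takes a negative value on the orthogonal complement of every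
finite-dimensional subspace has infinitely many negative eigenvalues (with multiplicity). -/
theorem stmt4 {H : Type*} [NormedAddCommGroup H] [InnerProductSpace ℝ H] [CompleteSpace H]
    (hinf : ¬ FiniteDimensional ℝ H)
    (A : H →L[ℝ] H) (hA : IsCompactOperator A) (hsa : IsSelfAdjoint A)
    (hneg : ∀ V : Submodule ℝ H, FiniteDimensional ℝ V → ∃ g ∈ Vᗮ, ⟪A g, g⟫ < 0) :
    eigCountBelow A 0 = ⊤ := by
  classical
  by_contra h
  have hfd : ∀ θ : ℝ, θ < 0 → FiniteDimensional ℝ (Module.End.eigenspace (A : H →ₗ[ℝ] H) θ) :=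
    fun θ hθ => eig_fd A hA hθ.ne
  set Eig : ℝ → Submodule ℝ H := fun θ => Module.End.eigenspace (A : H →ₗ[ℝ] H) θ with hEig
  set S : Set {t : ℝ // t < 0} := {θ | Eig θ.1 ≠ ⊥} with hS
  have hSfin : S.Finite := by
    by_contra hSinf
    apply h
    rw [eigCountBelow]
    refine enat_tsum_eq_top hSinf ?_
    intro θ hθ
    haveI := hfd θ.1 θ.2
    have hnt : Module.finrank ℝ (Eig θ.1) ≠ 0 := by
      rw [Ne, Submodule.finrank_eq_zero]
      exact hθ
    exact_mod_cast Nat.one_le_iff_ne_zero.mpr hnt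
  haveI hSfin' : Finite ↥S := hSfin
  set V : Submodule ℝ H := ⨆ θ : S, Eig θ.1.1 with hV
  haveI : ∀ θ : S, FiniteDimensional ℝ (Eig θ.1.1) := fun θ => hfd _ θ.1.2
  haveI hVfd : FiniteDimensional ℝ V := inferInstance
  obtain ⟨g, hgV, hgneg⟩ := hneg V hVfd
  have hsymA := hsa.isSymmetric
  have hVinv : ∀ u ∈ V, A u ∈ V := by
    intro u hu
    have hle : V ≤ Submodule.comap (A : H →ₗ[ℝ] H) V := by
      refine iSup_le fun θ => ?_
      intro z hz
      simp only [Submodule.mem_comap]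
      have hz2 : (A : H →ₗ[ℝ] H) z = θ.1.1 • z := Module.End.mem_eigenspace_iff.mp hz
      have hz' : (A : H →ₗ[ℝ] H) z ∈ Eig θ.1.1 := by
        rw [hz2]; exact (Eig θ.1.1).smul_mem _ hz
      exact le_iSup (fun θ : S => Eig θ.1.1) θ hz'
    exact hle hu
  have hWinv : ∀ v ∈ Vᗮ, A v ∈ Vᗮ := by
    intro v hv
    rw [Submodule.mem_orthogonal]
    intro u hu
    have h1 : ⟪A u, v⟫ = 0 := (Submodule.mem_orthogonal V v).mp hv (A u) (hVinv u hu)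
    calc ⟪u, A v⟫ = ⟪A u, v⟫ := (hsymA u v).symm
      _ = 0 := h1
  haveI : CompleteSpace (Vᗮ : Submodule ℝ H) := (Submodule.isClosed_orthogonal V).completeSpace_coe
  have hlin : IsCompactOperator ((A : H →ₗ[ℝ] H).restrict hWinv) :=
    IsCompactOperator.restrict' (f := (A : H →ₗ[ℝ] H)) hA hWinv
  set B : (Vᗮ : Submodule ℝ H) →L[ℝ] (Vᗮ : Submodule ℝ H) :=
    ContinuousLinearMap.mkOfIsCompactOperator hlin with hB_def
  have hBapp : ∀ z : (Vᗮ : Submodule ℝ H), (B z : H) = A z := fun z => rfl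
  have hBsym : ∀ x y : (Vᗮ : Submodule ℝ H), ⟪B x, y⟫ = ⟪x, B y⟫ := by
    intro x y
    rw [Submodule.coe_inner, Submodule.coe_inner, hBapp, hBapp]
    exact hsymA (x : H) (y : H)
  have hBcompact : IsCompactOperator B := hlin
  set g' : (Vᗮ : Submodule ℝ H) := ⟨g, hgV⟩ with hg'_def
  have hg' : ⟪B g', g'⟫ < 0 := by
    rw [Submodule.coe_inner, hBapp]
    exact hgneg
  obtain ⟨μ, w, hμ, hw0, hBw⟩ := exists_neg_eigenvalue B hBcompact hBsym hg'
  have hAw : A (w : H) = μ • (w : H) := by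
    have h1 := congrArg (Subtype.val) hBw
    rw [Submodule.coe_smul] at h1
    rw [← hBapp]
    exact h1
  have hwne : (w : H) ≠ 0 := fun hc => hw0 (Submodule.coe_eq_zero.mp hc)
  have hwV : (w : H) ∈ V := by
    have hmem : (w : H) ∈ Eig μ := Module.End.mem_eigenspace_iff.mpr hAw
    have hSμ : (⟨μ, hμ⟩ : {t : ℝ // t < 0}) ∈ S :=
      Submodule.ne_bot_iff _ |>.mpr ⟨(w : H), hmem, hwne⟩
    exact (le_iSup (fun θ : S => Eig θ.1.1) ⟨⟨μ, hμ⟩, hSμ⟩) hmem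
  have hzero : ⟪(w : H), (w : H)⟫ = 0 :=
    (Submodule.mem_orthogonal V (w : H)).mp w.2 (w : H) hwV
  exact hwne (inner_self_eq_zero.mp hzero)
end
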